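/- Let N ≥ 1, τ ∈ (0,∞], λ ∈ ℝ, and let a_j, c_j : [0,τ) → ℂ (1 ≤ j ≤ N) with each a_j twice differentiable and each c_j differentiable, satisfying on [0,τ) the hyperbolic Calogero–Moser equations a_j'' = −4·Σ_{k≠j} V'(a_j − a_k) and the linear equations c_j' = 2i·Σ_{k≠j} (c_j − c_k)·V(a_j − a_k); suppose that at t = 0 the Bäcklund relations c_j·a_j' = 2λ + 2i·Σ_{k≠j} c_k·α(a_j − a_k) and the constraints c_j·(λ − i·Σ_{k=1}^N conj(c_k)·α(a_j − conj(a_k) + iδ)) + 1 = 0 hold for all j; and suppose the strip condition −3δ/2 < Im a_j(t) < −δ/2 (all j) and the distinctness condition a_j(t) ≠ a_k(t) (all j ≠ k) hold for all t ∈ [0,τ). Then the Bäcklund relations c_j·a_j' = 2λ + 2i·Σ_{k≠j} c_k·α(a_j − a_k) hold for all j at every t ∈ [0,τ). -/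

import Mathlib

open MeasureTheory Filter Finset ComplexConjugate

noncomputable section

/-- `α(z) = (π/(2δ)) coth(πz/(2δ))`. -/
def cmAlpha (δ : ℝ) (z : ℂ) : ℂ :=
  ((Real.pi / (2 * δ) : ℝ) : ℂ) *
    (Complex.cosh ((Real.pi : ℂ) * z / (2 * (δ : ℂ))) /
     Complex.sinh ((Real.pi : ℂ) * z / (2 * (δ : ℂ))))

/-- `V(z) = (π/(2δ))² / sinh(πz/(2δ))²`. -/
def cmV (δ : ℝ) (z : ℂ) : ℂ :=
  ((Real.pi / (2 * δ) : ℝ) : ℂ) ^ 2 / Complex.sinh ((Real.pi : ℂ) * z / (2 * (δ : ℂ))) ^ 2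

/-- `V'(z) = -2 (π/(2δ))³ cosh(πz/(2δ)) / sinh(πz/(2δ))³`. -/
def cmV' (δ : ℝ) (z : ℂ) : ℂ :=
  -2 * ((Real.pi / (2 * δ) : ℝ) : ℂ) ^ 3 *
    Complex.cosh ((Real.pi : ℂ) * z / (2 * (δ : ℂ))) /
    Complex.sinh ((Real.pi : ℂ) * z / (2 * (δ : ℂ))) ^ 3

/-- real hyperbolic cotangent -/
def rcoth (y : ℝ) : ℝ := Real.cosh y / Real.sinh y

/-- `(T g)(x) = L`: the principal-value limit defining the operator `T` exists and equals `L`. -/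
def HasPV (δ : ℝ) (g : ℝ → ℂ) (x : ℝ) (L : ℂ) : Prop :=
  Tendsto (fun ε : ℝ =>
      (1 / (2 * (δ : ℂ))) *
        ∫ x' in {x' : ℝ | ε ≤ |x' - x|},
          ((rcoth (Real.pi * (x' - x) / (2 * δ)) : ℝ) : ℂ) * g x')
    (nhdsWithin 0 (Set.Ioi 0)) (nhds L)

/-- kernel of the operator `T̃`. -/
def TtKer (δ : ℝ) (x x' : ℝ) : ℝ := Real.tanh (Real.pi * (x' - x) / (2 * δ))

/-- the operator `T̃`. -/
def Ttilde (δ : ℝ) (g : ℝ → ℂ) (x : ℝ) : ℂ :=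
  (1 / (2 * (δ : ℂ))) * ∫ x', ((TtKer δ x x' : ℝ) : ℂ) * g x'

/-- `x' ↦ ∂_{x'} |w(x',t)|²`. -/
def sqAbsDeriv (w : ℝ → ℝ → ℂ) (t x' : ℝ) : ℝ :=
  deriv (fun y => ‖w y t‖ ^ 2) x'

/-- The intermediate mixed Manakov (IMM) system holds for the pair `(u,v)` at the point `(x,t)`,
including existence of the relevant principal-value limits and integrals. -/
def IMMat (δ : ℝ) (u v : ℝ → ℝ → ℂ) (x t : ℝ) : Prop :=
  ∃ Tu Tv : ℂ,
    HasPV δ (fun x' => ((sqAbsDeriv u t x' : ℝ) : ℂ)) x Tu ∧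
    HasPV δ (fun x' => ((sqAbsDeriv v t x' : ℝ) : ℂ)) x Tv ∧
    Integrable (fun x' => ((TtKer δ x x' : ℝ) : ℂ) * ((sqAbsDeriv u t x' : ℝ) : ℂ)) ∧
    Integrable (fun x' => ((TtKer δ x x' : ℝ) : ℂ) * ((sqAbsDeriv v t x' : ℝ) : ℂ)) ∧
    Complex.I * deriv (fun s => u x s) t =
      deriv (fun y => deriv (fun z => u z t) y) x
        + u x t * (Complex.I * ((sqAbsDeriv u t x : ℝ) : ℂ) + Tu)
        - u x t * Ttilde δ (fun x' => ((sqAbsDeriv v t x' : ℝ) : ℂ)) x ∧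
    Complex.I * deriv (fun s => v x s) t =
      deriv (fun y => deriv (fun z => v z t) y) x
        + v x t * (Complex.I * ((sqAbsDeriv v t x : ℝ) : ℂ) - Tv)
        + v x t * Ttilde δ (fun x' => ((sqAbsDeriv u t x' : ℝ) : ℂ)) x

/-- the time interval `[0, τ)` for `τ ∈ (0, ∞]`. -/
def timeDom (τ : ENNReal) : Set ℝ := {t : ℝ | 0 ≤ t ∧ ENNReal.ofReal t < τ}

section Aux

lemma sinh_arg_ne_zero {δ : ℝ} (hδ : 0 < δ) {z : ℂ} (him : |z.im| < δ) (hz : z ≠ 0) :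
    Complex.sinh ((Real.pi : ℂ) * z / (2 * (δ : ℂ))) ≠ 0 := by
  intro h
  unfold Complex.sinh at h
  rw [div_eq_zero_iff, sub_eq_zero] at h
  rcases h with h | h
  · obtain ⟨n, hn⟩ := Complex.exp_eq_exp_iff_exists_int.1 h
    have hπ : (Real.pi : ℂ) ≠ 0 := Complex.ofReal_ne_zero.2 Real.pi_ne_zero
    have hδ' : (δ : ℂ) ≠ 0 := Complex.ofReal_ne_zero.2 hδ.ne'
    have hzeq : z = 2 * δ * n * Complex.I := by
      field_simp at hn
      have h2 : (Real.pi : ℂ) * z = (Real.pi : ℂ) * (2 * δ * n * Complex.I) := by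
        linear_combination (Real.pi : ℂ) / 2 * hn
      exact mul_left_cancel₀ hπ h2
    have him2 : z.im = 2 * δ * n := by
      rw [hzeq]
      have : ((2 * δ * n : ℝ) : ℂ) * Complex.I = 2 * (δ:ℂ) * n * Complex.I := by push_cast; ring
      rw [← this]; simp
    have hn0 : n = 0 := by
      by_contra hne
      have h1 : (1:ℝ) ≤ |(n:ℝ)| := by exact_mod_cast Int.one_le_abs (by omega)
      rw [him2, abs_mul, abs_mul, abs_of_pos (by norm_num : (0:ℝ) < 2), abs_of_pos hδ] at him
      nlinarith
    exact hz (by rw [hzeq, hn0]; simp)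
  · exact two_ne_zero h

variable {δ : ℝ}

lemma hasDerivAt_cmAlpha (hδ : 0 < δ) {z : ℂ}
    (hs : Complex.sinh ((Real.pi : ℂ) * z / (2 * (δ : ℂ))) ≠ 0) :
    HasDerivAt (cmAlpha δ) (-cmV δ z) z := by
  have hδ' : (δ : ℂ) ≠ 0 := Complex.ofReal_ne_zero.2 hδ.ne'
  have hw : HasDerivAt (fun z : ℂ => (Real.pi : ℂ) * z / (2 * (δ : ℂ)))
      ((Real.pi : ℂ) / (2 * (δ : ℂ))) z := by
    simpa using ((hasDerivAt_id z).const_mul (Real.pi : ℂ)).div_const (2 * (δ : ℂ))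
  have hcosh := (Complex.hasDerivAt_cosh _).comp z hw
  have hsinh := (Complex.hasDerivAt_sinh _).comp z hw
  have hdiv := hcosh.div hsinh hs
  have H := hdiv.const_mul ((Real.pi / (2 * δ) : ℝ) : ℂ)
  refine HasDerivAt.congr_deriv (show HasDerivAt (cmAlpha δ) _ z from H) ?_
  symm
  simp only [Function.comp_apply, cmV]
  generalize hwdef : (Real.pi : ℂ) * z / (2 * (δ : ℂ)) = w at *
  have hpy := Complex.cosh_sq_sub_sinh_sq w
  have hq : ((Real.pi / (2 * δ) : ℝ) : ℂ) = (Real.pi : ℂ) / (2 * (δ : ℂ)) := by push_cast; ring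
  rw [hq]
  set S := Complex.sinh w
  set C := Complex.cosh w
  have h2 : (2 * (δ:ℂ)) ≠ 0 := by simp [hδ']
  field_simp
  linear_combination hpy

lemma cmAlpha_neg (z : ℂ) : cmAlpha δ (-z) = -cmAlpha δ z := by
  have h : (Real.pi : ℂ) * (-z) / (2 * (δ : ℂ)) = -((Real.pi : ℂ) * z / (2 * (δ : ℂ))) := by ring
  simp [cmAlpha, h, Complex.sinh_neg, Complex.cosh_neg, neg_div, div_neg]

lemma cmV_neg (z : ℂ) : cmV δ (-z) = cmV δ z := by
  have h : (Real.pi : ℂ) * (-z) / (2 * (δ : ℂ)) = -((Real.pi : ℂ) * z / (2 * (δ : ℂ))) := by ring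
  unfold cmV
  rw [h, Complex.sinh_neg, neg_sq]

lemma cmV'_eq {z : ℂ} (hs : Complex.sinh ((Real.pi : ℂ) * z / (2 * (δ : ℂ))) ≠ 0) :
    cmV' δ z = -2 * cmAlpha δ z * cmV δ z := by
  rw [cmV', cmAlpha, cmV]
  field_simp

lemma triple_identity {x y : ℂ}
    (hx : Complex.sinh ((Real.pi : ℂ) * x / (2 * (δ : ℂ))) ≠ 0)
    (hy : Complex.sinh ((Real.pi : ℂ) * y / (2 * (δ : ℂ))) ≠ 0)
    (hxy : Complex.sinh ((Real.pi : ℂ) * (x + y) / (2 * (δ : ℂ))) ≠ 0) :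
    cmV δ y * (cmAlpha δ (x + y) - cmAlpha δ x) =
    cmV δ x * (cmAlpha δ (x + y) - cmAlpha δ y) := by
  have hsum : (Real.pi : ℂ) * (x + y) / (2 * (δ : ℂ)) =
      (Real.pi : ℂ) * x / (2 * (δ : ℂ)) + (Real.pi : ℂ) * y / (2 * (δ : ℂ)) := by ring
  rw [cmV, cmV, cmAlpha, cmAlpha, cmAlpha, hsum]
  rw [hsum] at hxy
  set X := (Real.pi : ℂ) * x / (2 * (δ : ℂ))
  set Y := (Real.pi : ℂ) * y / (2 * (δ : ℂ))
  rw [Complex.sinh_add, Complex.cosh_add]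
  rw [Complex.sinh_add] at hxy
  have hpx := Complex.cosh_sq_sub_sinh_sq X
  have hpy := Complex.cosh_sq_sub_sinh_sq Y
  set q := ((Real.pi / (2 * δ) : ℝ) : ℂ)
  set SX := Complex.sinh X; set CX := Complex.cosh X
  set SY := Complex.sinh Y; set CY := Complex.cosh Y
  have hxy' : CY * SX + SY * CX ≠ 0 := by rw [mul_comm CY, mul_comm SY]; exact hxy
  field_simp
  linear_combination (q^3*SX*SY) * (hpy - hpx)

lemma sum_erase_comm {ι : Type*} [DecidableEq ι] (s : Finset ι) (F : ι → ι → ℂ) :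
    ∑ k ∈ s, ∑ l ∈ s.erase k, F k l = ∑ l ∈ s, ∑ k ∈ s.erase l, F k l := by
  have h1 : ∀ k ∈ s, ∑ l ∈ s.erase k, F k l = ∑ l ∈ s, if l ≠ k then F k l else 0 := by
    intro k hk
    rw [← Finset.sum_filter]
    apply Finset.sum_congr _ (fun _ _ => rfl)
    ext l; simp [Finset.mem_erase, and_comm]
  rw [Finset.sum_congr rfl h1, Finset.sum_comm]
  apply Finset.sum_congr rfl
  intro l hl
  rw [← Finset.sum_filter]
  apply Finset.sum_congr _ (fun _ _ => rfl)
  ext k; simp [Finset.mem_erase, ne_comm, and_comm]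

lemma erase_insert_erase {ι : Type*} [DecidableEq ι] [Fintype ι] {j k : ι} (h : k ≠ j) :
    (univ.erase k) = insert j ((univ.erase j).erase k) := by
  ext l
  simp only [Finset.mem_erase, Finset.mem_insert, Finset.mem_univ, and_true]
  constructor
  · intro hl
    rcases eq_or_ne l j with rfl | hlj
    · exact Or.inl rfl
    · exact Or.inr ⟨hl, hlj⟩
  · rintro (rfl | ⟨hl, _⟩)
    · exact (Ne.symm h)
    · exact hl

lemma key_alg {N : ℕ} (j : Fin N) (C A' G : Fin N → ℂ) (lam : ℂ)
    (β W : Fin N → Fin N → ℂ)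
    (hWs : ∀ k l, W k l = W l k) (hβa : ∀ k l, β k l = -β l k)
    (htri : ∀ k l, k ≠ j → l ≠ j → k ≠ l →
      W k l * (β j l - β j k) = W j k * (β j l - β k l))
    (hG : ∀ i, G i = C i * A' i - 2 * lam - 2 * Complex.I * ∑ l ∈ univ.erase i, C l * β i l) :
    (2 * Complex.I * ∑ k ∈ univ.erase j, (C j - C k) * W j k) * A' j
      + C j * (-4 * ∑ k ∈ univ.erase j, (-2 * β j k * W j k))
      - 2 * Complex.I * ∑ k ∈ univ.erase j,
          ((2 * Complex.I * ∑ l ∈ univ.erase k, (C k - C l) * W k l) * β j k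
            - C k * (W j k * (A' j - A' k)))
      = 2 * Complex.I * ∑ k ∈ univ.erase j, (G j - G k) * W j k := by
  classical
  set E := univ.erase j with hE
  set I2 := (2 : ℂ) * Complex.I with hI2
  have hI2sq : I2 ^ 2 = -4 := by
    rw [hI2]; ring_nf; rw [Complex.I_sq]; ring
  have hswap : ∑ k ∈ E, ∑ l ∈ E.erase k, C k * β j k * W k l
      = ∑ k ∈ E, ∑ l ∈ E.erase k, C l * β j l * W k l := by
    rw [sum_erase_comm]
    exact Finset.sum_congr rfl fun l _ => Finset.sum_congr rfl fun k _ => by rw [hWs l k]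
  have hD : ∑ k ∈ E, (β j k * ∑ l ∈ E.erase k, (C k - C l) * W k l)
      = ∑ k ∈ E, ∑ l ∈ E.erase k, C l * W k l * (β j l - β j k) := by
    have e1 : ∑ k ∈ E, (β j k * ∑ l ∈ E.erase k, (C k - C l) * W k l)
        = (∑ k ∈ E, ∑ l ∈ E.erase k, C k * β j k * W k l)
          - ∑ k ∈ E, ∑ l ∈ E.erase k, C l * β j k * W k l := by
      rw [← Finset.sum_sub_distrib]
      refine Finset.sum_congr rfl fun k _ => ?_
      rw [Finset.mul_sum, ← Finset.sum_sub_distrib]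
      exact Finset.sum_congr rfl fun l _ => by ring
    have e2 : ∑ k ∈ E, ∑ l ∈ E.erase k, C l * W k l * (β j l - β j k)
        = (∑ k ∈ E, ∑ l ∈ E.erase k, C l * β j l * W k l)
          - ∑ k ∈ E, ∑ l ∈ E.erase k, C l * β j k * W k l := by
      rw [← Finset.sum_sub_distrib]
      refine Finset.sum_congr rfl fun k _ => ?_
      rw [← Finset.sum_sub_distrib]
      exact Finset.sum_congr rfl fun l _ => by ring
    rw [e1, e2, hswap]
  have hR : I2 * ∑ k ∈ E, (G j - G k) * W j k
      = ∑ k ∈ E, (I2 * (W j k * (C j * A' j - C k * A' k))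
          + 4 * (W j k * β j k * (C j + C k))
          + 4 * ∑ l ∈ E.erase k, C l * W k l * (β j l - β j k)) := by
    rw [Finset.mul_sum]
    apply Finset.sum_congr rfl
    intro k hk
    have hkj : k ≠ j := (Finset.mem_erase.1 hk).1
    have hsplit : ∑ l ∈ univ.erase k, C l * β k l
        = C j * β k j + ∑ l ∈ E.erase k, C l * β k l := by
      rw [erase_insert_erase hkj, Finset.sum_insert (by simp [Finset.mem_erase])]
    have hsplit2 : ∑ l ∈ univ.erase j, C l * β j l
        = C k * β j k + ∑ l ∈ E.erase k, C l * β j l := by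
      rw [hE, ← Finset.add_sum_erase _ _ (Finset.mem_erase.2 ⟨hkj, Finset.mem_univ k⟩)]
    have hss : W j k * ((∑ l ∈ E.erase k, C l * β j l) - ∑ l ∈ E.erase k, C l * β k l)
        = ∑ l ∈ E.erase k, C l * W k l * (β j l - β j k) := by
      rw [← Finset.sum_sub_distrib, Finset.mul_sum]
      apply Finset.sum_congr rfl
      intro l hl
      have hlk : l ≠ k := (Finset.mem_erase.1 hl).1
      have hlj : l ≠ j := (Finset.mem_erase.1 (Finset.mem_erase.1 hl).2).1
      have h := htri k l hkj hlj (Ne.symm hlk)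
      calc W j k * (C l * β j l - C l * β k l)
          = C l * (W j k * (β j l - β k l)) := by ring
        _ = C l * (W k l * (β j l - β j k)) := by rw [← h]
        _ = C l * W k l * (β j l - β j k) := by ring
    rw [hG j, hG k, hsplit, hsplit2, hβa k j]
    linear_combination (-(W j k * β j k * (C j + C k))
        - (W j k * ((∑ l ∈ E.erase k, C l * β j l) - ∑ l ∈ E.erase k, C l * β k l))) * hI2sq
      + 4 * hss
  have hL : (I2 * ∑ k ∈ E, (C j - C k) * W j k) * A' j
      + C j * (-4 * ∑ k ∈ E, (-2 * β j k * W j k))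
      - I2 * ∑ k ∈ E, ((I2 * ∑ l ∈ univ.erase k, (C k - C l) * W k l) * β j k
            - C k * (W j k * (A' j - A' k)))
      = ∑ k ∈ E, (I2 * (W j k * (C j * A' j - C k * A' k))
          + 4 * (W j k * β j k * (C j + C k))
          + 4 * (β j k * ∑ l ∈ E.erase k, (C k - C l) * W k l)) := by
    rw [Finset.mul_sum, Finset.sum_mul, Finset.mul_sum, Finset.mul_sum, Finset.mul_sum,
      ← Finset.sum_add_distrib, ← Finset.sum_sub_distrib]
    apply Finset.sum_congr rfl
    intro k hk
    have hkj : k ≠ j := (Finset.mem_erase.1 hk).1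
    have hsplit3 : ∑ l ∈ univ.erase k, (C k - C l) * W k l
        = (C k - C j) * W j k + ∑ l ∈ E.erase k, (C k - C l) * W k l := by
      rw [erase_insert_erase hkj, Finset.sum_insert (by simp [Finset.mem_erase]), hWs j k]
    rw [hsplit3]
    linear_combination (-(β j k) * ((C k - C j) * W j k
      + ∑ l ∈ E.erase k, (C k - C l) * W k l)) * hI2sq
  rw [hL, hR]
  rw [Finset.sum_add_distrib, Finset.sum_add_distrib, Finset.sum_add_distrib,
    Finset.sum_add_distrib]
  congr 1
  rw [← Finset.mul_sum, ← Finset.mul_sum, hD]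

end Aux

/-- the Bäcklund relations are propagated in time by the Calogero–Moser flow. -/
theorem imm_backlund_conserved
    (δ : ℝ) (hδ : 0 < δ) (N : ℕ) (hN : 1 ≤ N)
    (τ : ENNReal) (hτ : 0 < τ) (lam : ℝ)
    (a a' a'' c : Fin N → ℝ → ℂ)
    (ha' : ∀ j, ∀ t ∈ timeDom τ, HasDerivWithinAt (a j) (a' j t) (timeDom τ) t)
    (ha'' : ∀ j, ∀ t ∈ timeDom τ, HasDerivWithinAt (a' j) (a'' j t) (timeDom τ) t)
    (hCM : ∀ j, ∀ t ∈ timeDom τ,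
      a'' j t = -4 * ∑ k ∈ univ.erase j, cmV' δ (a j t - a k t))
    (hc : ∀ j, ∀ t ∈ timeDom τ, HasDerivWithinAt (c j)
      (2 * Complex.I * ∑ k ∈ univ.erase j, (c j t - c k t) * cmV δ (a j t - a k t))
      (timeDom τ) t)
    (hB0 : ∀ j, c j 0 * a' j 0 =
      2 * (lam : ℂ) + 2 * Complex.I * ∑ k ∈ univ.erase j, c k 0 * cmAlpha δ (a j 0 - a k 0))
    (hC0 : ∀ j, c j 0 * ((lam : ℂ) - Complex.I * ∑ k, conj (c k 0) *
      cmAlpha δ (a j 0 - conj (a k 0) + Complex.I * (δ : ℂ))) + 1 = 0)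
    (hstrip : ∀ t ∈ timeDom τ, ∀ j, -(3 * δ) / 2 < (a j t).im ∧ (a j t).im < -δ / 2)
    (hdist : ∀ t ∈ timeDom τ, ∀ j k, j ≠ k → a j t ≠ a k t) :
    ∀ j, ∀ t ∈ timeDom τ, c j t * a' j t =
      2 * (lam : ℂ) + 2 * Complex.I * ∑ k ∈ univ.erase j, c k t * cmAlpha δ (a j t - a k t) := by
  classical
  -- the Bäcklund "error" functions
  set g : Fin N → ℝ → ℂ := fun i s => c i s * a' i s - 2 * (lam : ℂ)
      - 2 * Complex.I * ∑ k ∈ univ.erase i, c k s * cmAlpha δ (a i s - a k s) with hgdef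
  -- nonvanishing of the sinh's
  have hsinh : ∀ s ∈ timeDom τ, ∀ p q : Fin N, p ≠ q →
      Complex.sinh ((Real.pi : ℂ) * (a p s - a q s) / (2 * (δ : ℂ))) ≠ 0 := by
    intro s hs p q hpq
    apply sinh_arg_ne_zero hδ
    · have h1 := hstrip s hs p
      have h2 := hstrip s hs q
      rw [Complex.sub_im, abs_lt]
      constructor <;> [linarith [h1.1, h2.2]; linarith [h1.2, h2.1]]
    · exact sub_ne_zero.2 (hdist s hs p q hpq)
  -- derivative of the error functions
  have hg' : ∀ s ∈ timeDom τ, ∀ i, HasDerivWithinAt (g i)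
      (2 * Complex.I * ∑ k ∈ univ.erase i, (g i s - g k s) * cmV δ (a i s - a k s))
      (timeDom τ) s := by
    intro s hs i
    set β : Fin N → Fin N → ℂ := fun p q => cmAlpha δ (a p s - a q s) with hβ
    set W : Fin N → Fin N → ℂ := fun p q => cmV δ (a p s - a q s) with hW
    have hWs : ∀ p q, W p q = W q p := by
      intro p q
      show cmV δ (a p s - a q s) = cmV δ (a q s - a p s)
      rw [show a p s - a q s = -(a q s - a p s) by ring, cmV_neg]
    have hβa : ∀ p q, β p q = -β q p := by
      intro p q
      show cmAlpha δ (a p s - a q s) = -cmAlpha δ (a q s - a p s)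
      rw [show a p s - a q s = -(a q s - a p s) by ring, cmAlpha_neg]
    have htri : ∀ k l, k ≠ i → l ≠ i → k ≠ l →
        W k l * (β i l - β i k) = W i k * (β i l - β k l) := by
      intro k l hki hli hkl
      have hx := hsinh s hs i k (Ne.symm hki)
      have hy := hsinh s hs k l hkl
      have hxy := hsinh s hs i l (Ne.symm hli)
      have hxyeq : a i s - a l s = (a i s - a k s) + (a k s - a l s) := by ring
      rw [hxyeq] at hxy
      have := triple_identity hx hy hxy
      simpa [hβ, hW, ← hxyeq] using this
    -- construct the derivative
    have hmul : HasDerivWithinAt (fun r => c i r * a' i r)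
        ((2 * Complex.I * ∑ k ∈ univ.erase i, (c i s - c k s) * W i k) * a' i s
          + c i s * (-4 * ∑ k ∈ univ.erase i, (-2 * β i k * W i k)))
        (timeDom τ) s := by
      have h2 := ha'' i s hs
      rw [hCM i s hs] at h2
      have hsum : ∑ k ∈ univ.erase i, cmV' δ (a i s - a k s)
          = ∑ k ∈ univ.erase i, (-2 * β i k * W i k) := by
        refine Finset.sum_congr rfl fun k hk => ?_
        have hik : i ≠ k := fun h => (Finset.mem_erase.1 hk).1 h.symm
        rw [cmV'_eq (hsinh s hs i k hik)]
      rw [hsum] at h2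
      exact (hc i s hs).mul h2
    have hsum' : HasDerivWithinAt
        (fun r => ∑ k ∈ univ.erase i, c k r * cmAlpha δ (a i r - a k r))
        (∑ k ∈ univ.erase i,
          ((2 * Complex.I * ∑ l ∈ univ.erase k, (c k s - c l s) * W k l) * β i k
            + c k s * (-W i k * (a' i s - a' k s))))
        (timeDom τ) s := by
      apply HasDerivWithinAt.fun_sum
      intro k hk
      have hik : i ≠ k := fun h => (Finset.mem_erase.1 hk).1 h.symm
      have hα : HasDerivWithinAt (fun r => cmAlpha δ (a i r - a k r))
          (-W i k * (a' i s - a' k s)) (timeDom τ) s := by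
        have hdc := (ha' i s hs).sub (ha' k s hs)
        have := (hasDerivAt_cmAlpha hδ (hsinh s hs i k hik)).comp_hasDerivWithinAt s hdc
        simpa [hW, mul_comm, Function.comp_def] using this
      exact (hc k s hs).mul hα
    have hg'raw := ((hmul.sub_const (2 * (lam:ℂ))).sub (hsum'.const_mul (2 * Complex.I)))
    have heq : ∀ r, g i r = (fun r => c i r * a' i r - 2 * (lam:ℂ)
        - 2 * Complex.I * ∑ k ∈ univ.erase i, c k r * cmAlpha δ (a i r - a k r)) r :=
      fun r => rfl
    refine HasDerivWithinAt.congr_deriv (hg'raw.congr (fun r _ => heq r) (heq s)) ?_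
    have hkey := key_alg i (fun p => c p s) (fun p => a' p s) (fun p => g p s) (lam : ℂ)
      β W hWs hβa htri (fun p => rfl)
    rw [← hkey]
    have h3 : ∑ k ∈ univ.erase i,
          ((2 * Complex.I * ∑ l ∈ univ.erase k, (c k s - c l s) * W k l) * β i k
            + c k s * (-W i k * (a' i s - a' k s)))
        = ∑ k ∈ univ.erase i,
          ((2 * Complex.I * ∑ l ∈ univ.erase k, (c k s - c l s) * W k l) * β i k
            - c k s * (W i k * (a' i s - a' k s))) :=
      Finset.sum_congr rfl fun k _ => by ring
    rw [h3]
  -- the vector error function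
  set F : ℝ → Fin N → ℂ := fun s i => g i s with hF
  -- it vanishes at time 0
  have hF0 : F 0 = 0 := by
    funext i
    show g i 0 = 0
    simp only [hgdef]
    linear_combination hB0 i
  -- main argument via Grönwall
  intro j t ht
  suffices hgt : g j t = 0 by
    have h := hgt
    simp only [hgdef] at h
    linear_combination h
  -- a time beyond `t` but still inside the domain
  obtain ⟨T', hT'0, htT', hT'τ⟩ : ∃ T', 0 ≤ T' ∧ t < T' ∧ ENNReal.ofReal T' < τ := by
    obtain ⟨r, hr0, h1, h2⟩ := ENNReal.lt_iff_exists_real_btwn.1 ht.2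
    exact ⟨r, hr0, (ENNReal.ofReal_lt_ofReal_iff_of_nonneg ht.1).1 h1, h2⟩
  have hIccsub : Set.Icc (0:ℝ) t ⊆ timeDom τ := fun x hx =>
    ⟨hx.1, lt_of_le_of_lt (ENNReal.ofReal_le_ofReal hx.2) ht.2⟩
  -- bound for the coefficients
  have hh : ContinuousOn (fun s => ∑ p : Fin N, ∑ q ∈ univ.erase p,
      ‖cmV δ (a p s - a q s)‖) (Set.Icc 0 t) := by
    apply continuousOn_finset_sum
    intro p _
    apply continuousOn_finset_sum
    intro q hq
    have hpq : p ≠ q := fun h => (Finset.mem_erase.1 hq).1 h.symm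
    have hVcont : ContinuousOn (fun s => cmV δ (a p s - a q s)) (Set.Icc 0 t) := by
      intro s hsI
      have hs := hIccsub hsI
      have hsub : ContinuousWithinAt (fun r => a p r - a q r) (Set.Icc (0:ℝ) t) s :=
        (((ha' p s hs).continuousWithinAt).mono hIccsub).sub
          (((ha' q s hs).continuousWithinAt).mono hIccsub)
      have hcm : ContinuousAt (cmV δ) (a p s - a q s) := by
        have : ContinuousAt (fun z : ℂ => ((Real.pi / (2 * δ) : ℝ) : ℂ) ^ 2 /
            Complex.sinh ((Real.pi : ℂ) * z / (2 * (δ : ℂ))) ^ 2) (a p s - a q s) := by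
          apply ContinuousAt.div continuousAt_const
          · exact ((Complex.continuous_sinh.comp (by continuity)).pow 2).continuousAt
          · exact pow_ne_zero 2 (hsinh s hs p q hpq)
        exact this
      exact ContinuousAt.comp_continuousWithinAt (g := cmV δ) hcm hsub
    exact continuous_norm.comp_continuousOn hVcont
  obtain ⟨M, hM⟩ := (isCompact_Icc :
    IsCompact (Set.Icc (0:ℝ) t)).exists_bound_of_continuousOn hh
  set M0 := max M 0 with hM0
  have hM0nn : (0:ℝ) ≤ M0 := le_max_right _ _
  have hMb : ∀ s ∈ Set.Icc (0:ℝ) t, ∀ i : Fin N,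
      ∑ k ∈ univ.erase i, ‖cmV δ (a i s - a k s)‖ ≤ M0 := by
    intro s hsI i
    have h1 : ∑ k ∈ univ.erase i, ‖cmV δ (a i s - a k s)‖
        ≤ ∑ p : Fin N, ∑ q ∈ univ.erase p, ‖cmV δ (a p s - a q s)‖ := by
      apply Finset.single_le_sum (f := fun p => ∑ q ∈ univ.erase p,
        ‖cmV δ (a p s - a q s)‖) _ (Finset.mem_univ i)
      intro p _
      positivity
    refine le_trans h1 (le_trans (le_trans (le_abs_self _) ?_) (le_max_left _ _))
    exact hM _ hsI
  -- continuity of F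
  have hFcont : ContinuousOn F (Set.Icc (0:ℝ) t) := by
    rw [continuousOn_pi]
    intro i
    exact fun s hsI => ((hg' s (hIccsub hsI) i).continuousWithinAt).mono hIccsub
  -- right derivatives
  set f' : ℝ → Fin N → ℂ := fun s i =>
    2 * Complex.I * ∑ k ∈ univ.erase i, (g i s - g k s) * cmV δ (a i s - a k s) with hf'
  have hder : ∀ s ∈ Set.Ico (0:ℝ) t, HasDerivWithinAt F (f' s) (Set.Ici s) s := by
    intro s hsI
    have hs : s ∈ timeDom τ := hIccsub ⟨hsI.1, hsI.2.le⟩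
    have h1 : HasDerivWithinAt F (f' s) (timeDom τ) s :=
      hasDerivWithinAt_pi.2 (fun i => hg' s hs i)
    have hsub : Set.Ici s ∩ Set.Iio T' ⊆ timeDom τ := fun x hx =>
      ⟨le_trans hsI.1 hx.1,
        lt_of_le_of_lt (ENNReal.ofReal_le_ofReal (le_of_lt hx.2)) hT'τ⟩
    exact (hasDerivWithinAt_inter (Iio_mem_nhds (lt_trans hsI.2 htT'))).1 (h1.mono hsub)
  -- the Grönwall bound
  have hbound : ∀ s ∈ Set.Ico (0:ℝ) t, ‖f' s‖ ≤ (4 * M0) * ‖F s‖ + 0 := by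
    intro s hsI
    rw [add_zero]
    have hsI' : s ∈ Set.Icc (0:ℝ) t := ⟨hsI.1, hsI.2.le⟩
    have hKFnn : (0:ℝ) ≤ (4 * M0) * ‖F s‖ := by positivity
    rw [pi_norm_le_iff_of_nonneg hKFnn]
    intro i
    have step1 : ‖f' s i‖ ≤ 2 * ∑ k ∈ univ.erase i,
        ‖(g i s - g k s) * cmV δ (a i s - a k s)‖ := by
      rw [hf']
      rw [norm_mul]
      have h2 : ‖(2 * Complex.I : ℂ)‖ = 2 := by simp
      rw [h2]
      exact mul_le_mul_of_nonneg_left (norm_sum_le _ _) (by norm_num)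
    have step2 : ∑ k ∈ univ.erase i, ‖(g i s - g k s) * cmV δ (a i s - a k s)‖
        ≤ ∑ k ∈ univ.erase i, 2 * ‖F s‖ * ‖cmV δ (a i s - a k s)‖ := by
      apply Finset.sum_le_sum
      intro k _
      rw [norm_mul]
      have hgb : ‖g i s - g k s‖ ≤ 2 * ‖F s‖ := by
        refine le_trans (norm_sub_le _ _) ?_
        have h1 : ‖g i s‖ ≤ ‖F s‖ := norm_le_pi_norm (F s) i
        have h2 : ‖g k s‖ ≤ ‖F s‖ := norm_le_pi_norm (F s) k
        linarith
      exact mul_le_mul_of_nonneg_right hgb (norm_nonneg _)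
    have step3 : ∑ k ∈ univ.erase i, 2 * ‖F s‖ * ‖cmV δ (a i s - a k s)‖
        = 2 * ‖F s‖ * ∑ k ∈ univ.erase i, ‖cmV δ (a i s - a k s)‖ := by
      rw [Finset.mul_sum]
    calc ‖f' s i‖ ≤ 2 * ∑ k ∈ univ.erase i,
          ‖(g i s - g k s) * cmV δ (a i s - a k s)‖ := step1
      _ ≤ 2 * (2 * ‖F s‖ * ∑ k ∈ univ.erase i,
          ‖cmV δ (a i s - a k s)‖) := by
          rw [← step3]
          exact mul_le_mul_of_nonneg_left step2 (by norm_num)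
      _ ≤ 2 * (2 * ‖F s‖ * M0) := by
          have := hMb s hsI' i
          have h0 : (0:ℝ) ≤ 2 * ‖F s‖ := by positivity
          exact mul_le_mul_of_nonneg_left (mul_le_mul_of_nonneg_left this h0) (by norm_num)
      _ = (4 * M0) * ‖F s‖ := by ring
  have hgron := norm_le_gronwallBound_of_norm_deriv_right_le (δ := 0) (ε := 0) hFcont hder
    (by simp [hF0]) hbound t (Set.right_mem_Icc.2 ht.1)
  rw [gronwallBound_ε0_δ0] at hgron
  have hFt : F t = 0 := norm_le_zero_iff.1 hgron
  exact congrFun hFt j
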